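/- Let V be a Volterra operator with skew-symmetric matrix (a_{ki}), |a_{ki}| ≤ 1, and let b ∈ ℓ^∞ satisfy b_k a_{ki} ≤ 0 for all pairs (k,i). Then φ_b(V(x)) ≤ φ_b(x) for all x ∈ S, where φ_b(x) = Σ b_k x_k; consequently the sequence n ↦ φ_b(Vⁿ(x)) converges for every x ∈ S. -/
import Mathlib


open Filter Topology

private lemma sumc_summable (a : ℕ → ℕ → ℝ) (hbd : ∀ k i, |a k i| ≤ 1)
    (x : ℕ → ℝ) (hx0 : ∀ k, 0 ≤ x k) (hxs : Summable x) (k : ℕ) :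
    Summable (fun i => a k i * x i) := by
  apply Summable.of_abs
  apply hxs.of_nonneg_of_le (fun i => abs_nonneg _)
  intro i
  rw [abs_mul]
  calc |a k i| * |x i| ≤ 1 * |x i| :=
        mul_le_mul_of_nonneg_right (hbd k i) (abs_nonneg _)
    _ = x i := by rw [one_mul, abs_of_nonneg (hx0 i)]

private lemma sumc_bound (a : ℕ → ℕ → ℝ) (hbd : ∀ k i, |a k i| ≤ 1)
    (x : ℕ → ℝ) (hx0 : ∀ k, 0 ≤ x k) (hxs : Summable x) (hx1 : ∑' k, x k = 1)
    (k : ℕ) : |∑' i, a k i * x i| ≤ 1 := by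
  have h1 : Summable (fun i => |a k i * x i|) := by
    apply hxs.of_nonneg_of_le (fun i => abs_nonneg _)
    intro i
    rw [abs_mul]
    calc |a k i| * |x i| ≤ 1 * |x i| :=
          mul_le_mul_of_nonneg_right (hbd k i) (abs_nonneg _)
      _ = x i := by rw [one_mul, abs_of_nonneg (hx0 i)]
  calc |∑' i, a k i * x i| ≤ ∑' i, |a k i * x i| := by
        have hn : Summable (fun i => ‖a k i * x i‖) := by
          simpa only [Real.norm_eq_abs] using h1
        have h2 := norm_tsum_le_tsum_norm hn
        simpa only [Real.norm_eq_abs] using h2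
    _ ≤ ∑' i, x i := by
        apply Summable.tsum_le_tsum _ h1 hxs
        intro i
        rw [abs_mul]
        calc |a k i| * |x i| ≤ 1 * |x i| :=
              mul_le_mul_of_nonneg_right (hbd k i) (abs_nonneg _)
          _ = x i := by rw [one_mul, abs_of_nonneg (hx0 i)]
    _ = 1 := hx1

private lemma double_zero (a : ℕ → ℕ → ℝ) (hskew : ∀ k i, a k i = -a i k)
    (hbd : ∀ k i, |a k i| ≤ 1)
    (x : ℕ → ℝ) (hx0 : ∀ k, 0 ≤ x k) (hxs : Summable x) :
    ∑' k, x k * ∑' i, a k i * x i = 0 := by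
  set f : ℕ × ℕ → ℝ := fun p => a p.1 p.2 * (x p.1 * x p.2) with hf
  have hxx : Summable (fun p : ℕ × ℕ => x p.1 * x p.2) :=
    hxs.mul_of_nonneg hxs hx0 hx0
  have hfs : Summable f := by
    apply Summable.of_abs
    apply hxx.of_nonneg_of_le (fun p => abs_nonneg _)
    intro p
    rw [hf, abs_mul]
    calc |a p.1 p.2| * |x p.1 * x p.2| ≤ 1 * |x p.1 * x p.2| :=
          mul_le_mul_of_nonneg_right (hbd _ _) (abs_nonneg _)
      _ = x p.1 * x p.2 := by
          rw [one_mul, abs_of_nonneg (mul_nonneg (hx0 _) (hx0 _))]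
  have hzero : ∑' p, f p = 0 := by
    have hswap := (Equiv.prodComm ℕ ℕ).tsum_eq f
    have : ∑' p : ℕ × ℕ, f (p.2, p.1) = ∑' p, f p := hswap
    have hneg : ∀ p : ℕ × ℕ, f (p.2, p.1) = -f p := by
      intro p
      simp only [hf]
      rw [hskew p.2 p.1]
      ring
    rw [tsum_congr hneg, tsum_neg] at this
    linarith
  have hrw : ∀ k, x k * ∑' i, a k i * x i = ∑' i, f (k, i) := by
    intro k
    rw [← tsum_mul_left]
    apply tsum_congr
    intro i
    simp only [hf]
    ring
  rw [tsum_congr hrw, ← Summable.tsum_prod hfs, hzero]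

theorem stmt_9 (a : ℕ → ℕ → ℝ)
    (hskew : ∀ k i, a k i = -a i k) (hbd : ∀ k i, |a k i| ≤ 1)
    (V : (ℕ → ℝ) → (ℕ → ℝ))
    (hV : ∀ x k, V x k = x k * (1 + ∑' i, a k i * x i))
    (b : ℕ → ℝ) (hbdd : ∃ M, ∀ k, |b k| ≤ M)
    (hba : ∀ k i, b k * a k i ≤ 0) :
    (∀ x : ℕ → ℝ, ((∀ k, 0 ≤ x k) ∧ Summable x ∧ ∑' k, x k = 1) →
        ∑' k, b k * V x k ≤ ∑' k, b k * x k) ∧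
    (∀ x : ℕ → ℝ, ((∀ k, 0 ≤ x k) ∧ Summable x ∧ ∑' k, x k = 1) →
        ∃ L, Tendsto (fun n => ∑' k, b k * (V^[n] x) k) atTop (𝓝 L)) := by
  obtain ⟨M, hM⟩ := hbdd
  have hM0 : 0 ≤ M := le_trans (abs_nonneg _) (hM 0)
  -- basic facts for x in the simplex
  have key : ∀ x : ℕ → ℝ, ((∀ k, 0 ≤ x k) ∧ Summable x ∧ ∑' k, x k = 1) →
      ∑' k, b k * V x k ≤ ∑' k, b k * x k := by
    rintro x ⟨hx0, hxs, hx1⟩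
    set c : ℕ → ℝ := fun k => ∑' i, a k i * x i with hc
    have hcbd : ∀ k, |c k| ≤ 1 := fun k => sumc_bound a hbd x hx0 hxs hx1 k
    have h1 : Summable (fun k => b k * x k) := by
      apply Summable.of_abs
      apply (hxs.mul_left M).of_nonneg_of_le (fun k => abs_nonneg _)
      intro k
      rw [abs_mul]
      calc |b k| * |x k| ≤ M * |x k| :=
            mul_le_mul_of_nonneg_right (hM k) (abs_nonneg _)
        _ = M * x k := by rw [abs_of_nonneg (hx0 k)]
    have h2 : Summable (fun k => b k * (x k * c k)) := by
      apply Summable.of_abs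
      apply (hxs.mul_left M).of_nonneg_of_le (fun k => abs_nonneg _)
      intro k
      rw [abs_mul, abs_mul]
      calc |b k| * (|x k| * |c k|) ≤ M * (|x k| * 1) := by
            apply mul_le_mul (hM k) _ (mul_nonneg (abs_nonneg _) (abs_nonneg _)) hM0
            exact mul_le_mul_of_nonneg_left (hcbd k) (abs_nonneg _)
        _ = M * x k := by rw [mul_one, abs_of_nonneg (hx0 k)]
    have hVrw : ∀ k, b k * V x k = b k * x k + b k * (x k * c k) := by
      intro k; rw [hV]; ring
    have hneg : ∑' k, b k * (x k * c k) ≤ 0 := by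
      apply tsum_nonpos
      intro k
      have : b k * (x k * c k) = ∑' i, b k * a k i * (x k * x i) := by
        rw [hc]
        rw [← tsum_mul_left, ← tsum_mul_left]
        apply tsum_congr; intro i; ring
      rw [this]
      apply tsum_nonpos
      intro i
      exact mul_nonpos_of_nonpos_of_nonneg (hba k i) (mul_nonneg (hx0 k) (hx0 i))
    calc ∑' k, b k * V x k = ∑' k, (b k * x k + b k * (x k * c k)) :=
          tsum_congr hVrw
      _ = (∑' k, b k * x k) + ∑' k, b k * (x k * c k) := Summable.tsum_add h1 h2
      _ ≤ ∑' k, b k * x k := by linarith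
  refine ⟨key, ?_⟩
  rintro x ⟨hx0, hxs, hx1⟩
  -- invariance of the simplex
  have inv : ∀ y : ℕ → ℝ, ((∀ k, 0 ≤ y k) ∧ Summable y ∧ ∑' k, y k = 1) →
      ((∀ k, 0 ≤ V y k) ∧ Summable (V y) ∧ ∑' k, V y k = 1) := by
    rintro y ⟨hy0, hys, hy1⟩
    have hcbd : ∀ k, |∑' i, a k i * y i| ≤ 1 :=
      fun k => sumc_bound a hbd y hy0 hys hy1 k
    have hV0 : ∀ k, 0 ≤ V y k := by
      intro k
      rw [hV]
      apply mul_nonneg (hy0 k)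
      have := abs_le.mp (hcbd k)
      linarith [this.1]
    have hVle : ∀ k, V y k ≤ 2 * y k := by
      intro k
      rw [hV]
      have := abs_le.mp (hcbd k)
      nlinarith [hy0 k, this.2]
    have hVs : Summable (V y) :=
      (hys.mul_left 2).of_nonneg_of_le hV0 hVle
    refine ⟨hV0, hVs, ?_⟩
    have hsplit : ∀ k, V y k = y k + y k * ∑' i, a k i * y i := by
      intro k; rw [hV]; ring
    have h2 : Summable (fun k => y k * ∑' i, a k i * y i) := by
      apply Summable.of_abs
      apply hys.of_nonneg_of_le (fun k => abs_nonneg _)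
      intro k
      rw [abs_mul]
      calc |y k| * |∑' i, a k i * y i| ≤ |y k| * 1 :=
            mul_le_mul_of_nonneg_left (hcbd k) (abs_nonneg _)
        _ = y k := by rw [mul_one, abs_of_nonneg (hy0 k)]
    rw [tsum_congr hsplit, Summable.tsum_add hys h2, hy1,
      double_zero a hskew hbd y hy0 hys, add_zero]
  have hPn : ∀ n, ((∀ k, 0 ≤ (V^[n] x) k) ∧ Summable (V^[n] x) ∧
      ∑' k, (V^[n] x) k = 1) := by
    intro n
    induction n with
    | zero => exact ⟨hx0, hxs, hx1⟩
    | succ n ih =>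
        rw [Function.iterate_succ_apply']
        exact inv _ ih
  set u : ℕ → ℝ := fun n => ∑' k, b k * (V^[n] x) k with hu
  have hanti : Antitone u := by
    apply antitone_nat_of_succ_le
    intro n
    have := key _ (hPn n)
    simpa [hu, Function.iterate_succ_apply'] using this
  have hlb : ∀ n, -M ≤ u n := by
    intro n
    obtain ⟨hy0, hys, hy1⟩ := hPn n
    have hsum : Summable (fun k => b k * (V^[n] x) k) := by
      apply Summable.of_abs
      apply (hys.mul_left M).of_nonneg_of_le (fun k => abs_nonneg _)
      intro k
      rw [abs_mul]
      calc |b k| * |(V^[n] x) k| ≤ M * |(V^[n] x) k| :=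
            mul_le_mul_of_nonneg_right (hM k) (abs_nonneg _)
        _ = M * (V^[n] x) k := by rw [abs_of_nonneg (hy0 k)]
    have : ∑' k, (-M) * (V^[n] x) k ≤ ∑' k, b k * (V^[n] x) k := by
      apply Summable.tsum_le_tsum _ (hys.mul_left (-M)) hsum
      intro k
      apply mul_le_mul_of_nonneg_right _ (hy0 k)
      linarith [(abs_le.mp (hM k)).1]
    calc -M = ∑' k, (-M) * (V^[n] x) k := by rw [tsum_mul_left, hy1, mul_one]
      _ ≤ u n := this
  exact ⟨⨅ n, u n, tendsto_atTop_ciInf hanti ⟨-M, fun y ⟨n, hn⟩ => hn ▸ hlb n⟩⟩
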